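/- Let G_1,...,G_n be i.i.d. geometric with P(G_i=k)=q^k(1-q), 0<q<1, and let π = Γ_n(G) be the induced random permutation (indices ordered by G_i descending, ties broken by smaller index first). Fix k ≤ n, indices i_1 < i_2 < ... < i_k in [n], and a pattern σ ∈ S_k. Then the probability that the values π^{-1}(i_1), ..., π^{-1}(i_k) are order-isomorphic to σ^{-1} equals q^{maj(σ)} / [k]_q!. -/

import Mathlib

open MeasureTheory ProbabilityTheory

/-- The major index of a word `w` of length `N`. -/
def wmaj {N : ℕ} {α : Type*} [LinearOrder α] (w : Fin N → α) : ℕ :=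
  ∑ i ∈ Finset.range (N - 1),
    if h : i + 1 < N then
      (if w ⟨i + 1, h⟩ < w ⟨i, Nat.lt_of_succ_lt h⟩ then i + 1 else 0)
    else 0

/-- The major index of a permutation. -/
def maj {n : ℕ} (π : Equiv.Perm (Fin n)) : ℕ := wmaj (fun i => π i)

/-- The `q`-integer `[m]_q = 1 + q + ⋯ + q^{m-1}`. -/
def qint (q : ℝ) (m : ℕ) : ℝ := ∑ j ∈ Finset.range m, q ^ j

/-- The `q`-factorial `[n]_q! = ∏_{i=1}^n [i]_q`. -/
def qfact (q : ℝ) (n : ℕ) : ℝ := ∏ i ∈ Finset.range n, qint q (i + 1)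

/-- For `π = Γₙ(G)` the permutation produced by the Maj sampler (indices ordered by
`G` descending, ties broken by smaller index first), `invGamma G j` is the 0-indexed
position `π⁻¹(j)` of the index `j`, i.e. the number of indices `j'` that come
strictly before `j` in the ordering. -/
def invGamma {n : ℕ} (G : Fin n → ℕ) (j : Fin n) : ℕ :=
  (Finset.univ.filter (fun j' : Fin n =>
    G j < G j' ∨ (G j' = G j ∧ j' < j))).card

section Aux

variable {k : ℕ} (σ : Equiv.Perm (Fin k))

/-- value of `σ` at a natural number index. -/
def sv (j : ℕ) : ℕ := if h : j < k then (σ ⟨j, h⟩ : ℕ) else j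

/-- descent of `σ` at position `j` (0-based). -/
def dsc (j : ℕ) : Prop := sv σ (j + 1) < sv σ j

instance : DecidablePred (dsc σ) := fun _ => inferInstanceAs (Decidable (_ < _))

/-- number of descents at positions `≥ p`. -/
def dcount (p : ℕ) : ℕ := ∑ j ∈ Finset.range (k - 1), if p ≤ j ∧ dsc σ j then 1 else 0

/-- tail sums. -/
def Tt (k : ℕ) (t : ℕ → ℕ) (p : ℕ) : ℕ := ∑ j ∈ Finset.range k, if p ≤ j then t j else 0

/-- the change-of-variables map. -/
def phi (t : ℕ → ℕ) (p : ℕ) : ℕ := dcount σ p + Tt k t p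

lemma sv_coe (p : Fin k) : sv σ ↑p = ↑(σ p) := by
  unfold sv; rw [dif_pos p.isLt]

lemma sv_lt_iff (p r : Fin k) : sv σ p < sv σ r ↔ σ p < σ r := by
  rw [sv_coe, sv_coe]; exact Iff.rfl

lemma sv_inj {i j : ℕ} (hi : i < k) (hj : j < k) (h : sv σ i = sv σ j) : i = j := by
  simp only [sv, dif_pos hi, dif_pos hj] at h
  have := σ.injective (Fin.val_injective h)
  simpa [Fin.ext_iff] using this

lemma sv_chain (p : ℕ) : ∀ r : ℕ, (∀ j, p ≤ j → j < r → sv σ j < sv σ (j + 1)) →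
    p < r → sv σ p < sv σ r := by
  intro r
  induction r with
  | zero => omega
  | succ r ih =>
    intro h hpr
    rcases Nat.lt_or_ge p r with h1 | h1
    · exact lt_trans (ih (fun j hj hj' => h j hj (by omega)) h1) (h r (by omega) (by omega))
    · have : p = r := by omega
      subst this
      exact h p le_rfl (by omega)

lemma dcount_anti {p r : ℕ} (h : p ≤ r) : dcount σ r ≤ dcount σ p := by
  apply Finset.sum_le_sum
  intro j _
  split_ifs with h1 h2 h2 <;> simp_all <;> omega

lemma Tt_anti (t : ℕ → ℕ) {p r : ℕ} (h : p ≤ r) : Tt k t r ≤ Tt k t p := by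
  apply Finset.sum_le_sum
  intro j _
  split_ifs with h1 h2 h2 <;> simp_all <;> omega

lemma dcount_succ (p : ℕ) (hp : p < k - 1) :
    dcount σ p = (if dsc σ p then 1 else 0) + dcount σ (p + 1) := by
  unfold dcount
  have : ∀ j ∈ Finset.range (k - 1),
      (if p ≤ j ∧ dsc σ j then 1 else 0) =
        (if p + 1 ≤ j ∧ dsc σ j then 1 else 0) + (if j = p then (if dsc σ j then 1 else 0) else 0) := by
    intro j _
    by_cases hd : dsc σ j <;> simp only [hd, and_true, and_false, if_true, if_false] <;>
      split_ifs <;> omega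
  rw [Finset.sum_congr rfl this, Finset.sum_add_distrib, Finset.sum_ite_eq' (Finset.range (k - 1)) p]
  simp [Finset.mem_range.2 hp, Nat.add_comm]

lemma dcount_last : dcount σ (k - 1) = 0 := by
  apply Finset.sum_eq_zero
  intro j hj
  rw [Finset.mem_range] at hj
  apply if_neg
  rintro ⟨h1, h2⟩
  omega

lemma Tt_succ (t : ℕ → ℕ) (p : ℕ) (hp : p < k) :
    Tt k t p = t p + Tt k t (p + 1) := by
  unfold Tt
  have : ∀ j ∈ Finset.range k,
      (if p ≤ j then t j else 0) =
        (if p + 1 ≤ j then t j else 0) + (if j = p then t j else 0) := by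
    intro j _
    split_ifs <;> omega
  rw [Finset.sum_congr rfl this, Finset.sum_add_distrib, Finset.sum_ite_eq' (Finset.range k) p]
  simp [Finset.mem_range.2 hp, Nat.add_comm]

lemma Tt_top (t : ℕ → ℕ) : Tt k t k = 0 := by
  apply Finset.sum_eq_zero
  intro j hj
  rw [Finset.mem_range] at hj
  rw [if_neg]
  omega

end Aux

section Aux2

variable {k : ℕ} (σ : Equiv.Perm (Fin k))

/-- downward recursion determines `phi`. -/
lemma phi_of_rec (y t : ℕ → ℕ)
    (hadj : ∀ j, j + 1 < k → y j = y (j + 1) + (if dsc σ j then 1 else 0) + t j)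
    (hlast : 1 ≤ k → y (k - 1) = t (k - 1)) :
    ∀ p, p < k → y p = phi σ t p := by
  have key : ∀ m p, p < k → k - p ≤ m + 1 → y p = phi σ t p := by
    intro m
    induction m with
    | zero =>
      intro p hp hm
      have hpe : p = k - 1 := by omega
      subst hpe
      have hk1 : k - 1 < k := by omega
      have hsucc : k - 1 + 1 = k := by omega
      rw [phi, dcount_last, Tt_succ _ _ hk1, hsucc, Tt_top]
      have := hlast (by omega)
      omega
    | succ m ih =>
      intro p hp hm
      rcases Nat.lt_or_ge (m + 1) (k - p) with h1 | h1
      swap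
      · exact ih p hp h1
      · have hp1 : p + 1 < k := by omega
        have h2 := hadj p hp1
        have h3 := ih (p + 1) hp1 (by omega)
        have h4 : phi σ t p = (if dsc σ p then 1 else 0) + dcount σ (p + 1) + (t p + Tt k t (p + 1)) := by
          rw [phi, dcount_succ σ p (by omega), Tt_succ _ _ (by omega)]
        rw [phi] at h3
        set D := (if dsc σ p then 1 else 0)
        omega
  intro p hp
  exact key (k - p) p hp (by omega)

/-- forward direction of the order characterization. -/
lemma phi_lt_of_lt (t : ℕ → ℕ) {p r : ℕ} (hr : r < k) (hpr : p < r) :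
    phi σ t r < phi σ t p ∨ (phi σ t p = phi σ t r ∧ sv σ p < sv σ r) := by
  have hd := dcount_anti σ (Nat.le_of_lt hpr)
  have ht := Tt_anti (k := k) t (Nat.le_of_lt hpr)
  rcases Nat.lt_or_ge (phi σ t r) (phi σ t p) with h | h
  · exact Or.inl h
  · have heq : phi σ t p = phi σ t r := by rw [phi, phi] at h ⊢; omega
    refine Or.inr ⟨heq, ?_⟩
    have hdeq : dcount σ p = dcount σ r := by rw [phi, phi] at heq; omega
    apply sv_chain σ p r _ hpr
    intro j hj1 hj2
    have hnd : ¬ dsc σ j := by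
      intro hdsc
      have h1 : dcount σ j ≤ dcount σ p := dcount_anti σ hj1
      have h2 : dcount σ j = (if dsc σ j then 1 else 0) + dcount σ (j + 1) :=
        dcount_succ σ j (by omega)
      have h3 : dcount σ r ≤ dcount σ (j + 1) := dcount_anti σ (by omega)
      rw [if_pos hdsc] at h2
      omega
    have hne : sv σ j ≠ sv σ (j + 1) := fun h => by
      have := sv_inj σ (by omega) (by omega) h; omega
    rw [dsc] at hnd
    omega

/-- the full order characterization for `phi`. -/
lemma phi_cond (t : ℕ → ℕ) {p r : ℕ} (hp : p < k) (hr : r < k) :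
    p < r ↔ (phi σ t r < phi σ t p ∨ (phi σ t p = phi σ t r ∧ sv σ p < sv σ r)) := by
  constructor
  · exact phi_lt_of_lt σ t hr
  · intro h
    by_contra hnot
    rcases Nat.lt_or_ge r p with h1 | h1
    · have h2 := phi_lt_of_lt σ t hp h1
      omega
    · have : p = r := by omega
      subst this
      omega

/-- `maj` via descents. -/
lemma maj_eq : maj σ = ∑ j ∈ Finset.range (k - 1), if dsc σ j then j + 1 else 0 := by
  unfold maj wmaj
  apply Finset.sum_congr rfl
  intro i hi
  rw [Finset.mem_range] at hi
  have h1 : i + 1 < k := by omega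
  rw [dif_pos h1]
  have h2 : dsc σ i ↔ (σ ⟨i + 1, h1⟩ : ℕ) < (σ ⟨i, by omega⟩ : ℕ) := by
    unfold dsc sv
    rw [dif_pos h1, dif_pos (show i < k by omega)]
  by_cases hd : dsc σ i
  · rw [if_pos (by exact Fin.lt_def.2 (h2.1 hd)), if_pos hd]
  · rw [if_neg (fun hc => hd (h2.2 (Fin.lt_def.1 hc))), if_neg hd]

lemma sum_ite_le (c : ℕ) {j N : ℕ} (h : j < N) :
    ∑ p ∈ Finset.range N, (if p ≤ j then c else 0) = (j + 1) * c := by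
  rw [Finset.range_eq_Ico, ← Finset.sum_Ico_consecutive _ (Nat.zero_le (j + 1)) (by omega : j + 1 ≤ N)]
  have h1 : ∀ p ∈ Finset.Ico 0 (j + 1), (if p ≤ j then c else 0) = c := by
    intro p hp; rw [Finset.mem_Ico] at hp; rw [if_pos (by omega)]
  have h2 : ∀ p ∈ Finset.Ico (j + 1) N, (if p ≤ j then c else 0) = 0 := by
    intro p hp; rw [Finset.mem_Ico] at hp; rw [if_neg (by omega)]
  rw [Finset.sum_congr rfl h1, Finset.sum_congr rfl h2, Finset.sum_const, Finset.sum_const]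
  simp [Nat.card_Ico]

lemma sum_dcount : ∑ p ∈ Finset.range k, dcount σ p = maj σ := by
  rw [maj_eq]
  unfold dcount
  rw [Finset.sum_comm]
  apply Finset.sum_congr rfl
  intro j hj
  rw [Finset.mem_range] at hj
  by_cases hd : dsc σ j
  · rw [if_pos hd]
    have : ∀ p ∈ Finset.range k, (if p ≤ j ∧ dsc σ j then 1 else 0) = (if p ≤ j then 1 else 0) := by
      intro p _; simp [hd]
    rw [Finset.sum_congr rfl this, sum_ite_le 1 (show j < k by omega)]
    omega
  · rw [if_neg hd]
    apply Finset.sum_eq_zero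
    intro p _
    simp [hd]

lemma sum_Tt (t : ℕ → ℕ) : ∑ p ∈ Finset.range k, Tt k t p = ∑ j ∈ Finset.range k, (j + 1) * t j := by
  unfold Tt
  rw [Finset.sum_comm]
  apply Finset.sum_congr rfl
  intro j hj
  rw [Finset.mem_range] at hj
  exact sum_ite_le (t j) hj

end Aux2

section Aux3

variable {k : ℕ} (σ : Equiv.Perm (Fin k))

/-- extend a `Fin k`-tuple to `ℕ` by zero. -/
def tv (t : Fin k → ℕ) (j : ℕ) : ℕ := if h : j < k then t ⟨j, h⟩ else 0

lemma tv_coe (t : Fin k → ℕ) (j : Fin k) : tv t ↑j = t j := by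
  unfold tv; rw [dif_pos j.isLt]

lemma phi_congr (t t' : ℕ → ℕ) (h : ∀ j, j < k → t j = t' j) (p : ℕ) :
    phi σ t p = phi σ t' p := by
  unfold phi Tt
  congr 1
  apply Finset.sum_congr rfl
  intro j hj
  rw [Finset.mem_range] at hj
  rw [h j hj]

lemma dsc_iff (j : ℕ) (hj : j + 1 < k) :
    dsc σ j ↔ (σ ⟨j + 1, hj⟩ : ℕ) < (σ ⟨j, by omega⟩ : ℕ) := by
  unfold dsc sv
  rw [dif_pos hj, dif_pos (show j < k by omega)]

lemma cond_iff (y : Fin k → ℕ) :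
    (∀ p r : Fin k, p < r ↔ (y r < y p ∨ (y p = y r ∧ σ p < σ r))) ↔
      ∃ t : Fin k → ℕ, ∀ p : Fin k, y p = phi σ (tv t) ↑p := by
  constructor
  · intro h
    set yv : ℕ → ℕ := fun j => if h : j < k then y ⟨j, h⟩ else 0 with hyv
    set tn : ℕ → ℕ := fun j =>
      if j + 1 = k then yv j else yv j - yv (j + 1) - (if dsc σ j then 1 else 0) with htn
    have hadj : ∀ j, j + 1 < k → yv j = yv (j + 1) + (if dsc σ j then 1 else 0) + tn j := by
      intro j hj
      have hjk : j < k := by omega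
      have hc := (h ⟨j, hjk⟩ ⟨j + 1, hj⟩).1 (by exact Fin.mk_lt_mk.2 (by omega))
      have hy1 : yv j = y ⟨j, hjk⟩ := by simp [hyv, hjk]
      have hy2 : yv (j + 1) = y ⟨j + 1, hj⟩ := by simp [hyv, hj]
      have htnj : tn j = if j + 1 = k then yv j else yv j - yv (j + 1) - (if dsc σ j then 1 else 0) := rfl
      rw [if_neg (by omega)] at htnj
      by_cases hd : dsc σ j
      · rw [if_pos hd] at htnj ⊢
        have hlt : y ⟨j + 1, hj⟩ < y ⟨j, hjk⟩ := by
          rcases hc with h1 | ⟨h1, h2⟩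
          · exact h1
          · exfalso
            have := (dsc_iff σ j hj).1 hd
            have h3 := Fin.lt_def.1 h2
            omega
        omega
      · rw [if_neg hd] at htnj ⊢
        have hle : y ⟨j + 1, hj⟩ ≤ y ⟨j, hjk⟩ := by
          rcases hc with h1 | ⟨h1, h2⟩
          · omega
          · omega
        omega
    have hlast : 1 ≤ k → yv (k - 1) = tn (k - 1) := by
      intro hk
      have : tn (k - 1) = if (k - 1) + 1 = k then yv (k - 1) else _ := rfl
      rw [if_pos (by omega)] at this
      omega
    refine ⟨fun j : Fin k => tn ↑j, ?_⟩
    intro p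
    have h1 := phi_of_rec σ yv tn hadj hlast ↑p p.isLt
    have h2 : yv ↑p = y p := by simp [hyv, p.isLt]
    have h3 : phi σ tn ↑p = phi σ (tv (fun j : Fin k => tn ↑j)) ↑p := by
      apply phi_congr
      intro j hj
      unfold tv
      rw [dif_pos hj]
    rw [← h3, ← h1, h2]
  · rintro ⟨t, ht⟩ p r
    have h1 := phi_cond σ (tv t) p.isLt r.isLt
    have h2 := sv_lt_iff σ p r
    rw [ht p, ht r, Fin.lt_def, h1, h2]

lemma phiF_inj (t t' : Fin k → ℕ)
    (h : ∀ p : Fin k, phi σ (tv t) ↑p = phi σ (tv t') ↑p) : t = t' := by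
  have hT : ∀ p, p ≤ k → Tt k (tv t) p = Tt k (tv t') p := by
    intro p hp
    rcases Nat.lt_or_ge p k with h1 | h1
    · have h2 : phi σ (tv t) p = phi σ (tv t') p := h ⟨p, h1⟩
      unfold phi at h2
      omega
    · have hpk : p = k := by omega
      rw [hpk, Tt_top, Tt_top]
  funext j
  have h1 := Tt_succ (tv t) ↑j j.isLt
  have h2 := Tt_succ (tv t') ↑j j.isLt
  have h3 := hT ↑j (Nat.le_of_lt j.isLt)
  have h4 := hT (↑j + 1) j.isLt
  have h5 : tv t ↑j = tv t' ↑j := by omega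
  rw [tv_coe, tv_coe] at h5
  exact h5

lemma sum_phiF (t : Fin k → ℕ) :
    ∑ p : Fin k, phi σ (tv t) ↑p = maj σ + ∑ j : Fin k, ((j : ℕ) + 1) * t j := by
  rw [Fin.sum_univ_eq_sum_range (fun p => phi σ (tv t) p) k]
  unfold phi
  rw [Finset.sum_add_distrib, sum_dcount, sum_Tt]
  congr 1
  rw [← Fin.sum_univ_eq_sum_range (fun j => (j + 1) * tv t j) k]
  apply Finset.sum_congr rfl
  intro j _
  rw [tv_coe]

end Aux3

section Rank

variable {n : ℕ}

/-- "x comes before y" in the Maj-sampler ordering. -/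
def Bef (g : Fin n → ℕ) (x y : Fin n) : Prop := g y < g x ∨ (g x = g y ∧ x < y)

instance (g : Fin n → ℕ) (y : Fin n) : DecidablePred (fun x => Bef g x y) := fun x => by
  unfold Bef; infer_instance

lemma bef_trans (g : Fin n → ℕ) {x y z : Fin n} (h1 : Bef g x y) (h2 : Bef g y z) :
    Bef g x z := by
  simp only [Bef, Fin.lt_def] at h1 h2 ⊢
  omega

lemma bef_irrefl (g : Fin n → ℕ) (x : Fin n) : ¬ Bef g x x := by
  simp only [Bef, Fin.lt_def]
  omega

lemma bef_total (g : Fin n → ℕ) {x y : Fin n} (h : x ≠ y) : Bef g x y ∨ Bef g y x := by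
  have hv : (x : ℕ) ≠ (y : ℕ) := fun hc => h (Fin.ext hc)
  simp only [Bef, Fin.lt_def]
  omega

lemma invGamma_eq (g : Fin n → ℕ) (x : Fin n) :
    invGamma g x = (Finset.univ.filter (fun z => Bef g z x)).card := rfl

lemma invGamma_lt_of_bef (g : Fin n → ℕ) {x y : Fin n} (h : Bef g x y) :
    invGamma g x < invGamma g y := by
  rw [invGamma_eq, invGamma_eq]
  apply Finset.card_lt_card
  rw [Finset.ssubset_iff_of_subset]
  · refine ⟨x, ?_, ?_⟩
    · simp only [Finset.mem_filter]
      exact ⟨Finset.mem_univ x, h⟩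
    · simp only [Finset.mem_filter]
      exact fun hc => bef_irrefl g x hc.2
  · intro z hz
    simp only [Finset.mem_filter] at hz ⊢
    exact ⟨hz.1, bef_trans g hz.2 h⟩

lemma invGamma_lt_iff (g : Fin n → ℕ) (x y : Fin n) :
    invGamma g x < invGamma g y ↔ Bef g x y := by
  constructor
  · intro h
    by_contra hn
    rcases eq_or_ne x y with rfl | hne
    · omega
    · rcases bef_total g hne with h1 | h1
      · exact hn h1
      · have := invGamma_lt_of_bef g h1
        omega
  · exact invGamma_lt_of_bef g

end Rank

open scoped ENNReal

lemma tsum_pi_prod : ∀ (k : ℕ) (g : Fin k → ℕ → ℝ≥0∞),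
    ∑' t : Fin k → ℕ, ∏ p, g p (t p) = ∏ p, ∑' m, g p m := by
  intro k
  induction k with
  | zero =>
    intro g
    rw [tsum_eq_single (default : Fin 0 → ℕ) (fun b hb => (hb (Subsingleton.elim b default)).elim)]
    simp
  | succ k ih =>
    intro g
    have e := Fin.consEquiv (fun _ : Fin (k + 1) => ℕ)
    rw [← Equiv.tsum_eq (Fin.consEquiv (fun _ : Fin (k + 1) => ℕ)) (fun t => ∏ p, g p (t p))]
    rw [ENNReal.tsum_prod']
    have h1 : ∀ (a : ℕ) (f : Fin k → ℕ),
        (∏ p, g p ((Fin.consEquiv (fun _ : Fin (k + 1) => ℕ)) (a, f) p)) =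
          g 0 a * ∏ p : Fin k, g p.succ (f p) := by
      intro a f
      rw [Fin.prod_univ_succ]
      simp [Fin.consEquiv]
    calc ∑' (a : ℕ) (f : Fin k → ℕ), ∏ p, g p ((Fin.consEquiv (fun _ : Fin (k + 1) => ℕ)) (a, f) p)
        = ∑' (a : ℕ), g 0 a * ∑' (f : Fin k → ℕ), ∏ p : Fin k, g p.succ (f p) := by
          apply tsum_congr
          intro a
          rw [← ENNReal.tsum_mul_left]
          apply tsum_congr
          intro f
          rw [h1]
      _ = (∑' (a : ℕ), g 0 a) * ∑' (f : Fin k → ℕ), ∏ p : Fin k, g p.succ (f p) :=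
          ENNReal.tsum_mul_right
      _ = ∏ p : Fin (k + 1), ∑' m, g p m := by
          rw [ih (fun p => g p.succ), Fin.prod_univ_succ]

/-- For i.i.d. geometric `G₁, …, Gₙ`, indices `i₁ < ⋯ < i_k` (given by a strictly
monotone `ι : Fin k → Fin n`) and a pattern `σ ∈ S_k`, the probability that the
values `π⁻¹(i₁), …, π⁻¹(i_k)` of `π = Γₙ(G)` are order-isomorphic to `σ⁻¹` equals
`q^{maj σ} / [k]_q!`. -/
theorem pattern_prob {Ω : Type*} [MeasurableSpace Ω] (μ : Measure Ω)
    [IsProbabilityMeasure μ] (q : ℝ) (hq0 : 0 < q) (hq1 : q < 1)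
    (n : ℕ) (hn : 1 ≤ n) (G : Fin n → Ω → ℕ) (hmeas : ∀ i, Measurable (G i))
    (hindep : iIndepFun G μ)
    (hgeom : ∀ i, ∀ m : ℕ, (μ {ω | G i ω = m}).toReal = q ^ m * (1 - q))
    (k : ℕ) (hk : k ≤ n) (ι : Fin k → Fin n) (hι : StrictMono ι)
    (σ : Equiv.Perm (Fin k)) :
    (μ {ω | ∀ a b : Fin k,
        σ⁻¹ a < σ⁻¹ b ↔ invGamma (fun i => G i ω) (ι a) < invGamma (fun i => G i ω) (ι b)}).toReal
      = q ^ maj σ / qfact q k := by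
  classical
  set aq : ℝ≥0∞ := ENNReal.ofReal q with haq
  set bq : ℝ≥0∞ := ENNReal.ofReal (1 - q) with hbq
  have hGm : ∀ i m, μ {ω | G i ω = m} = aq ^ m * bq := by
    intro i m
    have h1 : μ {ω | G i ω = m} = ENNReal.ofReal ((μ {ω | G i ω = m}).toReal) :=
      (ENNReal.ofReal_toReal (measure_ne_top μ _)).symm
    rw [h1, hgeom i m, ENNReal.ofReal_mul (pow_nonneg hq0.le m), ENNReal.ofReal_pow hq0.le]
  set f : Fin k → Fin n := fun p => ι (σ p) with hfdef
  have hf : Function.Injective f := fun p r h => σ.injective (hι.injective h)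
  set A : (Fin k → ℕ) → Set Ω := fun y => ⋂ p : Fin k, {ω | G (f p) ω = y p} with hA
  -- Step 1: rewrite the event
  have hE : {ω | ∀ a b : Fin k,
      σ⁻¹ a < σ⁻¹ b ↔ invGamma (fun i => G i ω) (ι a) < invGamma (fun i => G i ω) (ι b)}
      = ⋃ t : Fin k → ℕ, A (fun p => phi σ (tv t) ↑p) := by
    ext ω
    have hcond : (∀ a b : Fin k,
        σ⁻¹ a < σ⁻¹ b ↔ invGamma (fun i => G i ω) (ι a) < invGamma (fun i => G i ω) (ι b)) ↔
        (∀ p r : Fin k, p < r ↔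
          (G (f r) ω < G (f p) ω ∨ (G (f p) ω = G (f r) ω ∧ σ p < σ r))) := by
      constructor
      · intro h p r
        have h2 := h (σ p) (σ r)
        rw [Equiv.Perm.inv_def, Equiv.symm_apply_apply, Equiv.symm_apply_apply] at h2
        rw [h2, invGamma_lt_iff]
        unfold Bef
        rw [hι.lt_iff_lt]
      · intro h c d
        have h2 := h (σ⁻¹ c) (σ⁻¹ d)
        simp only [hfdef, Equiv.Perm.coe_inv, Equiv.apply_symm_apply] at h2
        rw [invGamma_lt_iff]
        unfold Bef
        rw [hι.lt_iff_lt]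
        exact h2
    simp only [Set.mem_setOf_eq, Set.mem_iUnion]
    rw [hcond, cond_iff σ (fun p => G (f p) ω)]
    constructor
    · rintro ⟨t, ht⟩
      exact ⟨t, by simp only [hA, Set.mem_iInter, Set.mem_setOf_eq]; exact ht⟩
    · rintro ⟨t, ht⟩
      exact ⟨t, by simpa only [hA, Set.mem_iInter, Set.mem_setOf_eq] using ht⟩
  -- Step 2: measurability and disjointness
  have hAmeas : ∀ y : Fin k → ℕ, MeasurableSet (A y) := by
    intro y
    apply MeasurableSet.iInter
    intro p
    exact hmeas (f p) (measurableSet_singleton (y p))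
  have hdisj : Pairwise (Function.onFun Disjoint
      (fun t : Fin k → ℕ => A (fun p => phi σ (tv t) ↑p))) := by
    intro t t' hne
    have hyne : ∃ p : Fin k, phi σ (tv t) ↑p ≠ phi σ (tv t') ↑p := by
      by_contra hc
      push_neg at hc
      exact hne (phiF_inj σ t t' hc)
    obtain ⟨p, hp⟩ := hyne
    rw [Function.onFun, Set.disjoint_left]
    intro ω h1 h2
    simp only [hA, Set.mem_iInter, Set.mem_setOf_eq] at h1 h2
    exact hp ((h1 p).symm.trans (h2 p))
  -- Step 3: measure of a cell
  have hμA : ∀ y : Fin k → ℕ, μ (A y) = ∏ p : Fin k, (aq ^ y p * bq) := by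
    intro y
    have h1 : A y = ⋂ i ∈ Finset.image f Finset.univ,
        G i ⁻¹' {m | ∀ p, f p = i → m = y p} := by
      ext ω
      simp only [hA, Set.mem_iInter, Set.mem_setOf_eq, Finset.mem_image, Set.mem_preimage,
        Finset.mem_univ, true_and]
      constructor
      · rintro h i ⟨p, rfl⟩ p' hp'
        have := hf hp'
        subst this
        exact h p'
      · intro h p
        exact h (f p) ⟨p, rfl⟩ p rfl
    have h2 : ∀ i ∈ Finset.image f Finset.univ,
        MeasurableSet[(inferInstance : MeasurableSpace ℕ).comap (G i)]
          (G i ⁻¹' {m | ∀ p, f p = i → m = y p}) :=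
      fun i _ => ⟨{m | ∀ p, f p = i → m = y p}, (Set.to_countable _).measurableSet, rfl⟩
    rw [h1, hindep.meas_biInter h2, Finset.prod_image (fun p _ p' _ h => hf h)]
    apply Finset.prod_congr rfl
    intro p _
    have h3 : G (f p) ⁻¹' {m | ∀ p', f p' = f p → m = y p'} = {ω | G (f p) ω = y p} := by
      ext ω
      simp only [Set.mem_preimage, Set.mem_setOf_eq]
      constructor
      · intro h
        exact h p rfl
      · intro h p' hp'
        have := hf hp'
        subst this
        exact h
    rw [h3, hGm]
  -- Step 4: the product over a cell
  have hprod : ∀ t : Fin k → ℕ, (∏ p : Fin k, (aq ^ (phi σ (tv t) ↑p) * bq)) =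
      aq ^ maj σ * bq ^ k * ∏ j : Fin k, (aq ^ ((j : ℕ) + 1)) ^ t j := by
    intro t
    rw [Finset.prod_mul_distrib, Finset.prod_const, Finset.card_univ, Fintype.card_fin,
      Finset.prod_pow_eq_pow_sum, sum_phiF σ t, pow_add]
    have h4 : aq ^ (∑ j : Fin k, ((j : ℕ) + 1) * t j) = ∏ j : Fin k, (aq ^ ((j : ℕ) + 1)) ^ t j := by
      rw [← Finset.prod_pow_eq_pow_sum]
      exact Finset.prod_congr rfl (fun j _ => pow_mul aq _ _)
    rw [h4]
    ring
  -- Step 5: sum up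
  have hval : μ {ω | ∀ a b : Fin k,
      σ⁻¹ a < σ⁻¹ b ↔ invGamma (fun i => G i ω) (ι a) < invGamma (fun i => G i ω) (ι b)}
      = aq ^ maj σ * bq ^ k * ∏ j : Fin k, (1 - aq ^ ((j : ℕ) + 1))⁻¹ := by
    rw [hE, measure_iUnion hdisj (fun t => hAmeas _)]
    have h5 : ∀ t : Fin k → ℕ, μ (A (fun p => phi σ (tv t) ↑p)) =
        aq ^ maj σ * bq ^ k * ∏ j : Fin k, (aq ^ ((j : ℕ) + 1)) ^ t j := by
      intro t
      rw [hμA, hprod]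
    rw [tsum_congr h5, ENNReal.tsum_mul_left,
      tsum_pi_prod k (fun j m => (aq ^ ((j : ℕ) + 1)) ^ m)]
    congr 1
    exact Finset.prod_congr rfl (fun j _ => ENNReal.tsum_geometric _)
  -- Step 6: toReal and final algebra
  rw [hval]
  have hpow : ∀ m : ℕ, aq ^ m = ENNReal.ofReal (q ^ m) := fun m =>
    (ENNReal.ofReal_pow hq0.le m).symm
  have hposm : ∀ m : ℕ, (0 : ℝ) < 1 - q ^ (m + 1) := by
    intro m
    have h7 : q ^ (m + 1) < 1 := pow_lt_one₀ hq0.le hq1 (by omega)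
    linarith
  have hfac : ∀ j : Fin k, ((1 - aq ^ ((j : ℕ) + 1))⁻¹).toReal = (1 - q ^ ((j : ℕ) + 1))⁻¹ := by
    intro j
    have h6 : (1 : ℝ≥0∞) - aq ^ ((j : ℕ) + 1) = ENNReal.ofReal (1 - q ^ ((j : ℕ) + 1)) := by
      rw [hpow, ← ENNReal.ofReal_one, ← ENNReal.ofReal_sub _ (pow_nonneg hq0.le _)]
    rw [h6, ← ENNReal.ofReal_inv_of_pos (hposm _), ENNReal.toReal_ofReal (inv_nonneg.2 (hposm _).le)]
  rw [ENNReal.toReal_mul, ENNReal.toReal_mul, ENNReal.toReal_pow, ENNReal.toReal_pow,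
    ENNReal.toReal_prod, haq, hbq, ENNReal.toReal_ofReal hq0.le,
    ENNReal.toReal_ofReal (by linarith : (0:ℝ) ≤ 1 - q)]
  rw [Finset.prod_congr rfl (fun j _ => hfac j)]
  -- final real algebra
  have hq1' : (1 : ℝ) - q ≠ 0 := sub_ne_zero.2 (by linarith)
  have hqint : ∀ m : ℕ, qint q (m + 1) = (1 - q ^ (m + 1)) / (1 - q) := by
    intro m
    rw [qint, geom_sum_eq (ne_of_lt hq1)]
    rw [div_eq_div_iff (sub_ne_zero.2 (ne_of_lt hq1)) hq1']
    ring
  have hqfact : qfact q k = (∏ i ∈ Finset.range k, (1 - q ^ (i + 1))) / (1 - q) ^ k := by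
    rw [qfact, Finset.prod_congr rfl (fun i _ => hqint i), Finset.prod_div_distrib,
      Finset.prod_const, Finset.card_range]
  rw [hqfact, div_div_eq_mul_div]
  rw [Fin.prod_univ_eq_prod_range (fun j => (1 - q ^ (j + 1))⁻¹) k]
  rw [Finset.prod_inv_distrib]
  ring
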